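/- For every complex z with |z| < 1: 2 * Li_{2,1}(z) + Li_{1,2}(z) = Li_1(z) * Li_2(z). -/

import Mathlib

open scoped BigOperators

/-- Multiple polylogarithm `Li_{s_1,...,s_l}(z) = ∑_{n_1 > ... > n_l ≥ 1} z^{n_1}/(n_1^{s_1}⋯n_l^{s_l})`. -/
noncomputable def multiLi (s : List ℕ) (z : ℂ) : ℂ :=
  ∑' f : {f : Fin s.length → ℕ // StrictAnti f ∧ ∀ i, 1 ≤ f i},
    (if h : 0 < s.length then z ^ f.1 ⟨0, h⟩ else 1) /
      ∏ i, (f.1 i : ℂ) ^ s.get i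

private def multiLiE1 : ℕ ≃ {f : Fin 1 → ℕ // StrictAnti f ∧ ∀ i, 1 ≤ f i} where
  toFun n := ⟨![n + 1], by
    constructor
    · intro i j hij
      exact absurd (Subsingleton.elim i j) (ne_of_lt hij)
    · intro i; fin_cases i; simp⟩
  invFun f := f.1 0 - 1
  left_inv n := by simp
  right_inv f := by
    obtain ⟨f, hf, h1⟩ := f
    have := h1 0
    apply Subtype.ext
    funext i
    fin_cases i
    simp
    omega

private def multiLiE2 : ℕ × ℕ ≃ {f : Fin 2 → ℕ // StrictAnti f ∧ ∀ i, 1 ≤ f i} where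
  toFun p := ⟨![p.1 + p.2 + 2, p.2 + 1], by
    constructor
    · intro i j hij
      fin_cases i <;> fin_cases j <;> simp_all <;> omega
    · intro i; fin_cases i <;> simp⟩
  invFun f := (f.1 0 - f.1 1 - 1, f.1 1 - 1)
  left_inv p := by
    obtain ⟨n, m⟩ := p
    simp [Prod.ext_iff]
    omega
  right_inv f := by
    obtain ⟨f, hf, h1⟩ := f
    have h01 : f 1 < f 0 := hf (by norm_num : (0 : Fin 2) < 1)
    have := h1 1
    apply Subtype.ext
    funext i
    fin_cases i <;> simp <;> omega

private lemma multiLi_single (s : ℕ) (z : ℂ) :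
    multiLi [s] z = ∑' n : ℕ, z ^ (n+1) / ((n+1 : ℕ) : ℂ) ^ s := by
  rw [multiLi]
  simp only [List.length_cons, List.length_nil, Nat.reduceAdd]
  rw [← multiLiE1.tsum_eq]
  refine tsum_congr fun n => ?_
  simp [multiLiE1]

private lemma multiLi_double (a b : ℕ) (z : ℂ) : multiLi [a, b] z
    = ∑' p : ℕ × ℕ, z ^ (p.1+p.2+2) / (((p.1+p.2+2 : ℕ) : ℂ)^a * ((p.2+1 : ℕ) : ℂ)^b) := by
  rw [multiLi]
  simp only [List.length_cons, List.length_nil, Nat.reduceAdd]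
  rw [← multiLiE2.tsum_eq]
  refine tsum_congr fun p => ?_
  simp [multiLiE2, Fin.prod_univ_two]

private lemma recip_aux (B C : ℂ) (hB : B ≠ 0) (hC : C ≠ 0) (hA : B + C ≠ 0) :
    1/(C*B^2) = 1/((B+C)*B^2) + 1/((B+C)^2*B) + 1/((B+C)^2*C) := by
  have d1 : (B+C)*B^2 ≠ 0 := mul_ne_zero hA (pow_ne_zero _ hB)
  have d2 : (B+C)^2*B ≠ 0 := mul_ne_zero (pow_ne_zero _ hA) hB
  have d3 : (B+C)^2*C ≠ 0 := mul_ne_zero (pow_ne_zero _ hA) hC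
  have d0 : C*B^2 ≠ 0 := mul_ne_zero hC (pow_ne_zero _ hB)
  rw [div_add_div _ _ d1 d2, div_add_div _ _ (mul_ne_zero d1 d2) d3,
    div_eq_div_iff d0 (mul_ne_zero (mul_ne_zero d1 d2) d3)]
  ring

private lemma pf_aux (z : ℂ) (n m : ℕ) :
    z ^ (n+1) / ((n+1:ℕ):ℂ) ^ 1 * (z ^ (m+1) / ((m+1:ℕ):ℂ)^2) =
      z ^ (n+m+2) / (((n+m+2:ℕ):ℂ)^1 * ((m+1:ℕ):ℂ)^2)
    + z ^ (n+m+2) / (((n+m+2:ℕ):ℂ)^2 * ((m+1:ℕ):ℂ)^1)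
    + z ^ (n+m+2) / (((n+m+2:ℕ):ℂ)^2 * ((n+1:ℕ):ℂ)^1) := by
  set B : ℂ := ((m+1:ℕ):ℂ) with hBdef
  set C : ℂ := ((n+1:ℕ):ℂ) with hCdef
  have hB : B ≠ 0 := Nat.cast_ne_zero.mpr (Nat.succ_ne_zero m)
  have hC : C ≠ 0 := Nat.cast_ne_zero.mpr (Nat.succ_ne_zero n)
  have hA : ((n+m+2:ℕ):ℂ) = B + C := by rw [hBdef, hCdef]; push_cast; ring
  have hA0 : B + C ≠ 0 := by
    rw [← hA]; exact Nat.cast_ne_zero.mpr (by omega)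
  have hz : z ^ (n+m+2) = z^(n+1) * z^(m+1) := by ring
  rw [hA, hz]
  calc z ^ (n+1) / C ^ 1 * (z ^ (m+1) / B^2)
      = z^(n+1) * z^(m+1) * (1/(C*B^2)) := by ring
    _ = z^(n+1) * z^(m+1) *
        (1/((B+C)*B^2) + 1/((B+C)^2*B) + 1/((B+C)^2*C)) := by
          rw [recip_aux B C hB hC hA0]
    _ = z ^ (n+1) * z ^ (m+1) / ((B+C)^1 * B^2)
        + z ^ (n+1) * z ^ (m+1) / ((B+C)^2 * B^1)
        + z ^ (n+1) * z ^ (m+1) / ((B+C)^2 * C^1) := by ring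

private lemma aux_norm (z : ℂ) (k A B a b : ℕ) (hA : 1 ≤ A) (hB : 1 ≤ B) :
    ‖z ^ k / ((A:ℂ)^a * (B:ℂ)^b)‖ ≤ ‖z‖ ^ k := by
  rw [norm_div, norm_pow, norm_mul, norm_pow, norm_pow, Complex.norm_natCast,
    Complex.norm_natCast]
  apply div_le_self (by positivity)
  have hA' : (1:ℝ) ≤ (A:ℝ) := by exact_mod_cast hA
  have hB' : (1:ℝ) ≤ (B:ℝ) := by exact_mod_cast hB
  nlinarith [one_le_pow₀ hA' (n := a), one_le_pow₀ hB' (n := b)]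

set_option maxHeartbeats 1600000 in
theorem multiLi_weight_three (z : ℂ) (hz : ‖z‖ < 1) :
    2 * multiLi [2, 1] z + multiLi [1, 2] z = multiLi [1] z * multiLi [2] z := by
  have hgeom : Summable (fun n : ℕ => ‖z‖ ^ (n+1)) := by
    exact (summable_geometric_of_lt_one (norm_nonneg z) hz).comp_injective
      (add_left_injective 1)
  -- summability of the norms of the two single series
  have hs1 : Summable fun n : ℕ => ‖z ^ (n+1) / ((n+1:ℕ):ℂ) ^ 1‖ := by
    refine hgeom.of_nonneg_of_le (fun n => norm_nonneg _) (fun n => ?_)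
    simpa using aux_norm z (n+1) (n+1) 1 1 0 (by omega) (by omega)
  have hs2 : Summable fun n : ℕ => ‖z ^ (n+1) / ((n+1:ℕ):ℂ) ^ 2‖ := by
    refine hgeom.of_nonneg_of_le (fun n => norm_nonneg _) (fun n => ?_)
    simpa using aux_norm z (n+1) (n+1) 1 2 0 (by omega) (by omega)
  -- summable bound on pairs
  have hb : Summable fun p : ℕ × ℕ => ‖z‖ ^ (p.1+1) * ‖z‖ ^ (p.2+1) :=
    hgeom.mul_of_nonneg hgeom (fun n => by positivity) (fun n => by positivity)
  have hbound : ∀ (a b : ℕ) (p : ℕ × ℕ),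
      ‖z ^ (p.1+p.2+2) / (((p.1+p.2+2 : ℕ) : ℂ)^a * ((p.2+1 : ℕ) : ℂ)^b)‖
        ≤ ‖z‖ ^ (p.1+1) * ‖z‖ ^ (p.2+1) := by
    intro a b p
    have h := aux_norm z (p.1+p.2+2) (p.1+p.2+2) (p.2+1) a b (by omega) (by omega)
    calc ‖z ^ (p.1+p.2+2) / (((p.1+p.2+2 : ℕ) : ℂ)^a * ((p.2+1 : ℕ) : ℂ)^b)‖
        ≤ ‖z‖ ^ (p.1+p.2+2) := h
      _ = ‖z‖ ^ (p.1+1) * ‖z‖ ^ (p.2+1) := by rw [← pow_add]; congr 1; omega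
  -- the three pieces
  have hf1 : Summable fun p : ℕ × ℕ =>
      z ^ (p.1+p.2+2) / (((p.1+p.2+2 : ℕ) : ℂ)^1 * ((p.2+1 : ℕ) : ℂ)^2) :=
    hb.of_norm_bounded (hbound 1 2)
  have hf2 : Summable fun p : ℕ × ℕ =>
      z ^ (p.1+p.2+2) / (((p.1+p.2+2 : ℕ) : ℂ)^2 * ((p.2+1 : ℕ) : ℂ)^1) :=
    hb.of_norm_bounded (hbound 2 1)
  have hf3 : Summable fun p : ℕ × ℕ =>
      z ^ (p.1+p.2+2) / (((p.1+p.2+2 : ℕ) : ℂ)^2 * ((p.1+1 : ℕ) : ℂ)^1) := by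
    refine hb.of_norm_bounded (fun p => ?_)
    have h := aux_norm z (p.1+p.2+2) (p.1+p.2+2) (p.1+1) 2 1 (by omega) (by omega)
    calc ‖z ^ (p.1+p.2+2) / (((p.1+p.2+2 : ℕ) : ℂ)^2 * ((p.1+1 : ℕ) : ℂ)^1)‖
        ≤ ‖z‖ ^ (p.1+p.2+2) := h
      _ = ‖z‖ ^ (p.1+1) * ‖z‖ ^ (p.2+1) := by rw [← pow_add]; congr 1; omega
  -- the third piece sums to multiLi [2,1] as well
  have hswap : (∑' p : ℕ × ℕ,
      z ^ (p.1+p.2+2) / (((p.1+p.2+2 : ℕ) : ℂ)^2 * ((p.1+1 : ℕ) : ℂ)^1))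
      = multiLi [2, 1] z := by
    rw [multiLi_double]
    rw [← (Equiv.prodComm ℕ ℕ).tsum_eq
      (fun p : ℕ × ℕ => z ^ (p.1+p.2+2) / (((p.1+p.2+2 : ℕ) : ℂ)^2 * ((p.1+1 : ℕ) : ℂ)^1))]
    refine tsum_congr fun p => ?_
    simp only [Equiv.prodComm_apply, Prod.fst_swap, Prod.snd_swap]
    rw [Nat.add_comm p.2 p.1]
  -- Cauchy product
  rw [multiLi_single 1, multiLi_single 2,
    tsum_mul_tsum_of_summable_norm hs1 hs2]
  have hpt : ∀ p : ℕ × ℕ,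
      z ^ (p.1+1) / ((p.1+1:ℕ):ℂ) ^ 1 * (z ^ (p.2+1) / ((p.2+1:ℕ):ℂ)^2)
      = z ^ (p.1+p.2+2) / (((p.1+p.2+2 : ℕ) : ℂ)^1 * ((p.2+1 : ℕ) : ℂ)^2)
      + z ^ (p.1+p.2+2) / (((p.1+p.2+2 : ℕ) : ℂ)^2 * ((p.2+1 : ℕ) : ℂ)^1)
      + z ^ (p.1+p.2+2) / (((p.1+p.2+2 : ℕ) : ℂ)^2 * ((p.1+1 : ℕ) : ℂ)^1) :=
    fun p => pf_aux z p.1 p.2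
  rw [tsum_congr hpt, Summable.tsum_add (hf1.add hf2) hf3, Summable.tsum_add hf1 hf2,
    ← multiLi_double 1 2, ← multiLi_double 2 1, hswap]
  ring
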